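/- Let n be a nonzero integer and suppose a, b, c are rationals with a² + b² = c², ab = 2n, and c ≠ a. Then the point (x, y) = (nb/(c − a), 2n²/(c − a)) satisfies y² = x³ − n²x with y ≠ 0. -/

import Mathlib

theorem stmt_18 (n : ℤ) (hn : n ≠ 0) (a b c : ℚ) (h1 : a^2 + b^2 = c^2)
    (h2 : a * b = 2 * (n : ℚ)) (hca : c ≠ a) :
    ((2 * (n : ℚ)^2 / (c - a))^2 =
      ((n : ℚ) * b / (c - a))^3 - (n : ℚ)^2 * ((n : ℚ) * b / (c - a))) ∧
      2 * (n : ℚ)^2 / (c - a) ≠ 0 := by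
  have hd : c - a ≠ 0 := sub_ne_zero.mpr hca
  have hnq : (n : ℚ) ≠ 0 := Int.cast_ne_zero.mpr hn
  constructor
  · field_simp
    linear_combination (-b) * h1 + (-2*(c-a)) * h2
  · positivity
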